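/- Let H be a graded vector space with a graded commutative associative product • of degree −n and a degree +1 operator B with B² = 0 making (H, •, B) a Batalin–Vilkovisky algebra (up to shift), and suppose there are linear maps π_* : HC → H and β : H → HC (of degrees 0 and +1 respectively, for a graded space HC) with π_* ∘ β = B and β ∘ π_* = 0. Then {a, b} := (−1)^{|a|} β(π_*(a) • π_*(b)) defines a graded Lie bracket of degree +1 on HC: it is graded skew-symmetric and satisfies the graded Jacobi identity. -/

import Mathlib

/-!
STATEMENT 17: Let `H` be a graded space with a graded commutative associative
product `•` of degree `−n` and a degree `+1` square-zero operator `B` making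
`(H, •, B)` a BV algebra (up to shift), and suppose `π_* : HC → H` (degree `0`)
and `β : H → HC` (degree `+1`) satisfy `π_* ∘ β = B` and `β ∘ π_* = 0`.  Then
`{a, b} := (−1)^{|a|} β(π_*(a) • π_*(b))` is a graded Lie bracket of degree `+1`
on `HC`: graded skew-symmetric and satisfying the graded Jacobi identity
(with signs `{a,b} = −(−1)^{(|a|+1)(|b|+1)}{b,a}` and
`(−1)^{(|a|+1)(|c|+1)}{{a,b},c} + cyclic = 0`).
-/

variable (H HC : ℤ → Type*) [∀ i, AddCommGroup (H i)] [∀ i, AddCommGroup (HC i)]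
variable (n : ℤ)

section

variable (mul : ∀ {i j l : ℤ}, i + j = l + n → H i → H j → H l)
  (B : ∀ {i j : ℤ}, j = i + 1 → H i → H j)
  (π : ∀ i, HC i →+ H i)
  (β : ∀ {i j : ℤ}, j = i + 1 → H i → HC j)

/-- The bracket `{a, b} := (−1)^{|a|} β(π_*(a) • π_*(b))`. -/
def cycBracket {i j l : ℤ} (h : i + j + 1 = l + n) (a : HC i) (b : HC j) : HC l :=
  (Int.negOnePow i : ℤ) •
    β (by omega : l = (i + j - n) + 1)
      (mul (by omega : i + j = (i + j - n) + n) (π i a) (π j b))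

/- ### Auxiliary material for the proof -/

lemma sgn_smul {M : Type*} [AddCommGroup M] (a b : ℤ) (v : M) :
    (Int.negOnePow a : ℤ) • (Int.negOnePow b : ℤ) • v = (Int.negOnePow (a + b) : ℤ) • v := by
  rw [smul_smul, ← Units.val_mul, ← Int.negOnePow_add]

lemma sgn_congr (a b : ℤ) (h : Even (a - b)) :
    (Int.negOnePow a : ℤ) = (Int.negOnePow b : ℤ) := by
  rw [(Int.negOnePow_eq_iff a b).mpr h]

lemma sgn_neg {M : Type*} [AddCommGroup M] (a : ℤ) (v : M) :
    -((Int.negOnePow a : ℤ) • v) = (Int.negOnePow (a + 1) : ℤ) • v := by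
  rw [Int.negOnePow_succ, Units.val_neg, neg_smul]

/-- Canonical form of the iterated terms `β(B(u•v)•w)`. -/
def Tt {j i m l : ℤ} (h : i + j + m + 2 = l + 2 * n) (u : H i) (v : H j) (w : H m) : HC l :=
  β (by omega : l = (l - 1) + 1)
    (mul (by omega : (i + j - n + 1) + m = (l - 1) + n)
      (B (by omega : i + j - n + 1 = (i + j - n) + 1)
        (mul (by omega : i + j = (i + j - n) + n) u v)) w)

lemma Tt_eq {i j m l p p' r : ℤ} (h : i + j + m + 2 = l + 2 * n)
    (h1 : i + j = p + n) (h2 : p' = p + 1) (h3 : p' + m = r + n) (h4 : l = r + 1)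
    (u : H i) (v : H j) (w : H m) :
    β h4 (mul h3 (B h2 (mul h1 u v)) w) = Tt H HC n mul B β h u v w := by
  obtain rfl : p = i + j - n := by omega
  subst h2
  obtain rfl : r = l - 1 := by omega
  rfl

lemma cyc_eq {i j l p : ℤ} (h : i + j + 1 = l + n) (hp : i + j = p + n) (hl : l = p + 1)
    (a : HC i) (b : HC j) :
    cycBracket H HC n mul π β h a b
      = (Int.negOnePow i : ℤ) • β hl (mul hp (π i a) (π j b)) := by
  obtain rfl : p = i + j - n := by omega
  rfl

set_option maxHeartbeats 2000000 in
theorem cyclic_bracket_is_graded_lie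
    -- `•` is biadditive, graded commutative and associative
    (hmul_addl : ∀ {i j l : ℤ} (h : i + j = l + n) (a a' : H i) (b : H j),
      mul h (a + a') b = mul h a b + mul h a' b)
    (hmul_addr : ∀ {i j l : ℤ} (h : i + j = l + n) (a : H i) (b b' : H j),
      mul h a (b + b') = mul h a b + mul h a b')
    (hcomm : ∀ {i j l : ℤ} (h : i + j = l + n) (h' : j + i = l + n) (a : H i) (b : H j),
      mul h a b = (Int.negOnePow (i * j) : ℤ) • mul h' b a)
    (hassoc : ∀ {i j m l p q : ℤ} (h1 : i + j = p + n) (h2 : p + m = l + n)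
      (h3 : j + m = q + n) (h4 : i + q = l + n) (a : H i) (b : H j) (c : H m),
      mul h2 (mul h1 a b) c = mul h4 a (mul h3 b c))
    -- `B` is additive and squares to zero
    (hB_add : ∀ {i j : ℤ} (h : j = i + 1) (a a' : H i), B h (a + a') = B h a + B h a')
    (hBB : ∀ {i j l : ℤ} (h1 : j = i + 1) (h2 : l = j + 1) (a : H i), B h2 (B h1 a) = 0)
    -- `B` is a second-order operator for `•`
    (hsecond : ∀ {i j m l : ℤ} (h : i + j + m + 1 = l + 2 * n) (x : H i) (y : H j) (z : H m),
      B (by omega : l = (i + j + m - 2*n) + 1)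
          (mul (by omega : (i + j - n) + m = (i + j + m - 2*n) + n)
            (mul (by omega : i + j = (i + j - n) + n) x y) z)
        = mul (by omega : (i + j - n + 1) + m = l + n)
            (B (by omega : i + j - n + 1 = (i + j - n) + 1) (mul (by omega : i + j = (i + j - n) + n) x y)) z
          + (Int.negOnePow (j * m) : ℤ) •
              mul (by omega : (i + m - n + 1) + j = l + n)
                (B (by omega : i + m - n + 1 = (i + m - n) + 1) (mul (by omega : i + m = (i + m - n) + n) x z)) y
          + (Int.negOnePow i : ℤ) •
              mul (by omega : i + (j + m - n + 1) = l + n) x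
                (B (by omega : j + m - n + 1 = (j + m - n) + 1) (mul (by omega : j + m = (j + m - n) + n) y z))
          - mul (by omega : (i + 1) + (j + m - n) = l + n)
              (B rfl x) (mul (by omega : j + m = (j + m - n) + n) y z)
          - (Int.negOnePow i : ℤ) •
              mul (by omega : i + (j + 1 + m - n) = l + n) x
                (mul (by omega : (j + 1) + m = (j + 1 + m - n) + n) (B rfl y) z)
          - (Int.negOnePow (i + j) : ℤ) •
              mul (by omega : (i + j - n) + (m + 1) = l + n) (mul (by omega : i + j = (i + j - n) + n) x y) (B rfl z))
    -- `π` and `β`: `π ∘ β = B`, `β ∘ π = 0`, `β` additive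
    (hπβ : ∀ {i j : ℤ} (h : j = i + 1) (x : H i), π j (β h x) = B h x)
    (hβπ : ∀ {i j : ℤ} (h : j = i + 1) (x : HC i), β h (π i x) = 0)
    (hβ_add : ∀ {i j : ℤ} (h : j = i + 1) (x y : H i), β h (x + y) = β h x + β h y) :
    -- graded skew-symmetry
    (∀ {i j l : ℤ} (h : i + j + 1 = l + n) (h' : j + i + 1 = l + n) (a : HC i) (b : HC j),
      cycBracket H HC n mul π β h a b
        = - ((Int.negOnePow ((i + 1) * (j + 1)) : ℤ) • cycBracket H HC n mul π β h' b a)) ∧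
    -- graded Jacobi identity
    (∀ {i j m l : ℤ} (h : i + j + m + 2 = l + 2 * n) (a : HC i) (b : HC j) (c : HC m),
      (Int.negOnePow ((i + 1) * (m + 1)) : ℤ) •
          cycBracket H HC n mul π β (by omega : (i + j + 1 - n) + m + 1 = l + n)
            (cycBracket H HC n mul π β
              (by omega : i + j + 1 = (i + j + 1 - n) + n) a b) c
        + (Int.negOnePow ((m + 1) * (j + 1)) : ℤ) •
            cycBracket H HC n mul π β (by omega : (m + i + 1 - n) + j + 1 = l + n)
              (cycBracket H HC n mul π β
                (by omega : m + i + 1 = (m + i + 1 - n) + n) c a) b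
        + (Int.negOnePow ((j + 1) * (i + 1)) : ℤ) •
            cycBracket H HC n mul π β (by omega : (j + m + 1 - n) + i + 1 = l + n)
              (cycBracket H HC n mul π β
                (by omega : j + m + 1 = (j + m + 1 - n) + n) b c) a
        = 0) := by
  refine ⟨?_, ?_⟩
  · have βsmul : ∀ {i j : ℤ} (h : j = i + 1) (r : ℤ) (x : H i),
        β h (r • x) = r • β h x :=
      fun h r x => map_zsmul (AddMonoidHom.mk' (β h) (hβ_add h)) r x
    -- skew-symmetry
    intro i j l h h' a b
    rw [cyc_eq H HC n mul π β h (show i + j = (i + j - n) + n by omega)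
        (show l = (i + j - n) + 1 by omega) a b,
      cyc_eq H HC n mul π β h' (show j + i = (i + j - n) + n by omega)
        (show l = (i + j - n) + 1 by omega) b a,
      hcomm (show i + j = (i + j - n) + n by omega) (show j + i = (i + j - n) + n by omega)
        (π i a) (π j b),
      βsmul, sgn_smul i (i * j), sgn_smul ((i + 1) * (j + 1)) j, sgn_neg,
      sgn_congr ((i + 1) * (j + 1) + j + 1) (i + i * j) ⟨j + 1, by ring⟩]
  · -- additivity consequences
    have βsmul : ∀ {i j : ℤ} (h : j = i + 1) (r : ℤ) (x : H i),
        β h (r • x) = r • β h x :=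
      fun h r x => map_zsmul (AddMonoidHom.mk' (β h) (hβ_add h)) r x
    have Bsmul : ∀ {i j : ℤ} (h : j = i + 1) (r : ℤ) (x : H i),
        B h (r • x) = r • B h x :=
      fun h r x => map_zsmul (AddMonoidHom.mk' (B h) (hB_add h)) r x
    have mulsl : ∀ {i j l : ℤ} (h : i + j = l + n) (r : ℤ) (a : H i) (b : H j),
        mul h (r • a) b = r • mul h a b :=
      fun h r a b => map_zsmul (AddMonoidHom.mk' (fun u => mul h u b) (fun u v => hmul_addl h u v b)) r a
    have mul0l : ∀ {i j l : ℤ} (h : i + j = l + n) (b : H j), mul h (0 : H i) b = 0 :=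
      fun h b => map_zero (AddMonoidHom.mk' (fun u => mul h u b) (fun u v => hmul_addl h u v b))
    have mul0r : ∀ {i j l : ℤ} (h : i + j = l + n) (a : H i), mul h a (0 : H j) = 0 :=
      fun h a => map_zero (AddMonoidHom.mk' (fun u => mul h a u) (fun u v => hmul_addr h a u v))
    have Bπ : ∀ {i j : ℤ} (h : j = i + 1) (a : HC i), B h (π i a) = 0 := by
      intro i j h a
      rw [← hπβ h (π i a), hβπ h a, map_zero]
    have βB : ∀ {i j l : ℤ} (h1 : j = i + 1) (h2 : l = j + 1) (x : H i),
        β h2 (B h1 x) = 0 := by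
      intro i j l h1 h2 x
      rw [← hπβ h1 x]
      exact hβπ h2 _
    -- the key consequence of the second-order property of `B`
    have star : ∀ {i j m l : ℤ} (h : i + j + m + 2 = l + 2 * n)
        (a : HC i) (b : HC j) (c : HC m),
        β (show l = (l - 1) + 1 by omega)
            (mul (show (i + j - n + 1) + m = (l - 1) + n by omega)
              (B (show i + j - n + 1 = (i + j - n) + 1 by omega)
                (mul (show i + j = (i + j - n) + n by omega) (π i a) (π j b))) (π m c))
        + (Int.negOnePow (j * m) : ℤ) •
            β (show l = (l - 1) + 1 by omega)
              (mul (show (i + m - n + 1) + j = (l - 1) + n by omega)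
                (B (show i + m - n + 1 = (i + m - n) + 1 by omega)
                  (mul (show i + m = (i + m - n) + n by omega) (π i a) (π m c))) (π j b))
        + (Int.negOnePow i : ℤ) •
            β (show l = (l - 1) + 1 by omega)
              (mul (show i + (j + m - n + 1) = (l - 1) + n by omega) (π i a)
                (B (show j + m - n + 1 = (j + m - n) + 1 by omega)
                  (mul (show j + m = (j + m - n) + n by omega) (π j b) (π m c))))
        = 0 := by
      intro i j m l h a b c
      have H0 := hsecond (l := l - 1) (by omega) (π i a) (π j b) (π m c)
      simp only [Bπ, mul0l, mul0r, smul_zero, sub_zero] at H0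
      have E := congrArg (β (show l = (l - 1) + 1 by omega)) H0
      rw [βB] at E
      rw [hβ_add, hβ_add, βsmul, βsmul] at E
      exact E.symm
    -- Jacobi identity
    intro i j m l h a b c
    have h1t : i + j + m + 2 = l + 2 * n := h
    have h2t : m + i + j + 2 = l + 2 * n := by omega
    have h3t : j + m + i + 2 = l + 2 * n := by omega
    -- the three canonical terms are
    -- T₁ = Tt h1t (π i a) (π j b) (π m c), T₂ = Tt h2t (π m c) (π i a) (π j b),
    -- T₃ = Tt h3t (π j b) (π m c) (π i a)
    -- Instance A of `star`, on (a, b, c):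
    have A := star h1t a b c
    rw [hcomm (show i + m = (i + m - n) + n by omega) (show m + i = (i + m - n) + n by omega)
          (π i a) (π m c),
        Bsmul, mulsl, βsmul,
        hcomm (show i + (j + m - n + 1) = (l - 1) + n by omega)
          (show (j + m - n + 1) + i = (l - 1) + n by omega) (π i a)
          (B (show j + m - n + 1 = (j + m - n) + 1 by omega)
            (mul (show j + m = (j + m - n) + n by omega) (π j b) (π m c))),
        βsmul,
        Tt_eq H HC n mul B β h1t (show i + j = (i + j - n) + n by omega)
          (show i + j - n + 1 = (i + j - n) + 1 by omega)
          (show (i + j - n + 1) + m = (l - 1) + n by omega)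
          (show l = (l - 1) + 1 by omega) (π i a) (π j b) (π m c),
        Tt_eq H HC n mul B β h2t (show m + i = (i + m - n) + n by omega)
          (show i + m - n + 1 = (i + m - n) + 1 by omega)
          (show (i + m - n + 1) + j = (l - 1) + n by omega)
          (show l = (l - 1) + 1 by omega) (π m c) (π i a) (π j b),
        Tt_eq H HC n mul B β h3t (show j + m = (j + m - n) + n by omega)
          (show j + m - n + 1 = (j + m - n) + 1 by omega)
          (show (j + m - n + 1) + i = (l - 1) + n by omega)
          (show l = (l - 1) + 1 by omega) (π j b) (π m c) (π i a),
        sgn_smul (j * m) (i * m), sgn_smul i (i * (j + m - n + 1))] at A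
    -- Instance B of `star`, on (b, c, a):
    have Bi := star h3t b c a
    rw [hcomm (show j + i = (j + i - n) + n by omega) (show i + j = (j + i - n) + n by omega)
          (π j b) (π i a),
        Bsmul, mulsl, βsmul,
        hcomm (show j + (m + i - n + 1) = (l - 1) + n by omega)
          (show (m + i - n + 1) + j = (l - 1) + n by omega) (π j b)
          (B (show m + i - n + 1 = (m + i - n) + 1 by omega)
            (mul (show m + i = (m + i - n) + n by omega) (π m c) (π i a))),
        βsmul,
        Tt_eq H HC n mul B β h3t (show j + m = (j + m - n) + n by omega)
          (show j + m - n + 1 = (j + m - n) + 1 by omega)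
          (show (j + m - n + 1) + i = (l - 1) + n by omega)
          (show l = (l - 1) + 1 by omega) (π j b) (π m c) (π i a),
        Tt_eq H HC n mul B β h1t (show i + j = (j + i - n) + n by omega)
          (show j + i - n + 1 = (j + i - n) + 1 by omega)
          (show (j + i - n + 1) + m = (l - 1) + n by omega)
          (show l = (l - 1) + 1 by omega) (π i a) (π j b) (π m c),
        Tt_eq H HC n mul B β h2t (show m + i = (m + i - n) + n by omega)
          (show m + i - n + 1 = (m + i - n) + 1 by omega)
          (show (m + i - n + 1) + j = (l - 1) + n by omega)
          (show l = (l - 1) + 1 by omega) (π m c) (π i a) (π j b),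
        sgn_smul (m * i) (j * i), sgn_smul j (j * (m + i - n + 1))] at Bi
    -- Instance C of `star`, on (c, a, b):
    have Ci := star h2t c a b
    rw [hcomm (show m + j = (m + j - n) + n by omega) (show j + m = (m + j - n) + n by omega)
          (π m c) (π j b),
        Bsmul, mulsl, βsmul,
        hcomm (show m + (i + j - n + 1) = (l - 1) + n by omega)
          (show (i + j - n + 1) + m = (l - 1) + n by omega) (π m c)
          (B (show i + j - n + 1 = (i + j - n) + 1 by omega)
            (mul (show i + j = (i + j - n) + n by omega) (π i a) (π j b))),
        βsmul,
        Tt_eq H HC n mul B β h2t (show m + i = (m + i - n) + n by omega)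
          (show m + i - n + 1 = (m + i - n) + 1 by omega)
          (show (m + i - n + 1) + j = (l - 1) + n by omega)
          (show l = (l - 1) + 1 by omega) (π m c) (π i a) (π j b),
        Tt_eq H HC n mul B β h3t (show j + m = (m + j - n) + n by omega)
          (show m + j - n + 1 = (m + j - n) + 1 by omega)
          (show (m + j - n + 1) + i = (l - 1) + n by omega)
          (show l = (l - 1) + 1 by omega) (π j b) (π m c) (π i a),
        Tt_eq H HC n mul B β h1t (show i + j = (i + j - n) + n by omega)
          (show i + j - n + 1 = (i + j - n) + 1 by omega)
          (show (i + j - n + 1) + m = (l - 1) + n by omega)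
          (show l = (l - 1) + 1 by omega) (π i a) (π j b) (π m c),
        sgn_smul (i * j) (m * j), sgn_smul m (m * (i + j - n + 1))] at Ci
    -- the combination lemma
    have main : (Int.negOnePow (i * m) : ℤ) • Tt H HC n mul B β h1t (π i a) (π j b) (π m c)
        + (Int.negOnePow (j * m) : ℤ) • Tt H HC n mul B β h2t (π m c) (π i a) (π j b)
        + (Int.negOnePow (i * j) : ℤ) • Tt H HC n mul B β h3t (π j b) (π m c) (π i a)
        = 0 := by
      rcases Int.even_or_odd (i * n) with hin | hin
      · -- use instance A, multiplied by (-1)^(i*m)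
        obtain ⟨k, hk⟩ := hin
        have e2 : (Int.negOnePow (j * m) : ℤ) • Tt H HC n mul B β h2t (π m c) (π i a) (π j b)
            = (Int.negOnePow (i * m) : ℤ) • (Int.negOnePow (j * m + i * m) : ℤ) •
                Tt H HC n mul B β h2t (π m c) (π i a) (π j b) := by
          rw [sgn_smul (i * m) (j * m + i * m),
            sgn_congr (i * m + (j * m + i * m)) (j * m) ⟨i * m, by ring⟩]
        have e3 : (Int.negOnePow (i * j) : ℤ) • Tt H HC n mul B β h3t (π j b) (π m c) (π i a)
            = (Int.negOnePow (i * m) : ℤ) • (Int.negOnePow (i + i * (j + m - n + 1)) : ℤ) •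
                Tt H HC n mul B β h3t (π j b) (π m c) (π i a) := by
          rw [sgn_smul (i * m) (i + i * (j + m - n + 1)),
            sgn_congr (i * m + (i + i * (j + m - n + 1))) (i * j)
              ⟨i * m + i - k, by linear_combination -hk⟩]
        rw [e2, e3, ← smul_add, ← smul_add, A, smul_zero]
      rcases Int.even_or_odd (j * n) with hjn | hjn
      · -- use instance B, multiplied by (-1)^(i*j)
        obtain ⟨k, hk⟩ := hjn
        have e1 : (Int.negOnePow (i * m) : ℤ) • Tt H HC n mul B β h1t (π i a) (π j b) (π m c)
            = (Int.negOnePow (i * j) : ℤ) • (Int.negOnePow (m * i + j * i) : ℤ) •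
                Tt H HC n mul B β h1t (π i a) (π j b) (π m c) := by
          rw [sgn_smul (i * j) (m * i + j * i),
            sgn_congr (i * j + (m * i + j * i)) (i * m) ⟨i * j, by ring⟩]
        have e2 : (Int.negOnePow (j * m) : ℤ) • Tt H HC n mul B β h2t (π m c) (π i a) (π j b)
            = (Int.negOnePow (i * j) : ℤ) • (Int.negOnePow (j + j * (m + i - n + 1)) : ℤ) •
                Tt H HC n mul B β h2t (π m c) (π i a) (π j b) := by
          rw [sgn_smul (i * j) (j + j * (m + i - n + 1)),
            sgn_congr (i * j + (j + j * (m + i - n + 1))) (j * m)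
              ⟨i * j + j - k, by linear_combination -hk⟩]
        have Bi' := (add_rotate _ _ _).symm.trans Bi
        rw [e1, e2, ← smul_add, ← smul_add, Bi', smul_zero]
      rcases Int.even_or_odd (m * n) with hmn | hmn
      · -- use instance C, multiplied by (-1)^(j*m)
        obtain ⟨k, hk⟩ := hmn
        have e1 : (Int.negOnePow (i * m) : ℤ) • Tt H HC n mul B β h1t (π i a) (π j b) (π m c)
            = (Int.negOnePow (j * m) : ℤ) • (Int.negOnePow (m + m * (i + j - n + 1)) : ℤ) •
                Tt H HC n mul B β h1t (π i a) (π j b) (π m c) := by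
          rw [sgn_smul (j * m) (m + m * (i + j - n + 1)),
            sgn_congr (j * m + (m + m * (i + j - n + 1))) (i * m)
              ⟨j * m + m - k, by linear_combination -hk⟩]
        have e3 : (Int.negOnePow (i * j) : ℤ) • Tt H HC n mul B β h3t (π j b) (π m c) (π i a)
            = (Int.negOnePow (j * m) : ℤ) • (Int.negOnePow (i * j + m * j) : ℤ) •
                Tt H HC n mul B β h3t (π j b) (π m c) (π i a) := by
          rw [sgn_smul (j * m) (i * j + m * j),
            sgn_congr (j * m + (i * j + m * j)) (i * j) ⟨j * m, by ring⟩]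
        have Ci' := (add_rotate _ _ _).trans Ci
        rw [e1, e3, ← smul_add, ← smul_add, Ci', smul_zero]
      · -- all three products are odd
        obtain ⟨oi, hon⟩ := Int.odd_mul.mp hin
        obtain ⟨oj, -⟩ := Int.odd_mul.mp hjn
        obtain ⟨om, -⟩ := Int.odd_mul.mp hmn
        have evjm : Even (j + m - n + 1) := by
          obtain ⟨p, hp⟩ := oj; obtain ⟨q, hq⟩ := om; obtain ⟨r, hr⟩ := hon
          exact ⟨p + q - r + 1, by omega⟩
        have evmi : Even (m + i - n + 1) := by
          obtain ⟨p, hp⟩ := om; obtain ⟨q, hq⟩ := oi; obtain ⟨r, hr⟩ := hon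
          exact ⟨p + q - r + 1, by omega⟩
        have evij : Even (i + j - n + 1) := by
          obtain ⟨p, hp⟩ := oi; obtain ⟨q, hq⟩ := oj; obtain ⟨r, hr⟩ := hon
          exact ⟨p + q - r + 1, by omega⟩
        rw [Int.negOnePow_even _ ((oj.mul om).add_odd (oi.mul om)),
            Int.negOnePow_odd _ (oi.add_even (evjm.mul_left i))] at A
        rw [Int.negOnePow_even _ ((om.mul oi).add_odd (oj.mul oi)),
            Int.negOnePow_odd _ (oj.add_even (evmi.mul_left j))] at Bi
        rw [Int.negOnePow_even _ ((oi.mul oj).add_odd (om.mul oj)),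
            Int.negOnePow_odd _ (om.add_even (evij.mul_left m))] at Ci
        simp only [Units.val_one, Units.val_neg, one_smul, neg_smul] at A Bi Ci
        rw [Int.negOnePow_odd _ (oi.mul om), Int.negOnePow_odd _ (oj.mul om),
          Int.negOnePow_odd _ (oi.mul oj)]
        simp only [Units.val_one, Units.val_neg, one_smul, neg_smul]
        have s := congrArg₂ (· + ·) A (congrArg₂ (· + ·) Bi Ci)
        simp only [add_zero] at s
        have key : Tt H HC n mul B β h1t (π i a) (π j b) (π m c)
            + Tt H HC n mul B β h2t (π m c) (π i a) (π j b)
            + Tt H HC n mul B β h3t (π j b) (π m c) (π i a) = 0 := by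
          rw [← s]; abel
        have h0 := congrArg (fun v => -v) key
        simp only [neg_zero] at h0
        rw [← h0]; abel
    -- rewrite the three summands of the Jacobi identity
    have t1 : (Int.negOnePow ((i + 1) * (m + 1)) : ℤ) •
          cycBracket H HC n mul π β (by omega : (i + j + 1 - n) + m + 1 = l + n)
            (cycBracket H HC n mul π β
              (by omega : i + j + 1 = (i + j + 1 - n) + n) a b) c
        = (Int.negOnePow (i + j + m + n + i * m) : ℤ) •
            Tt H HC n mul B β h1t (π i a) (π j b) (π m c) := by
      rw [cyc_eq H HC n mul π β (by omega : (i + j + 1 - n) + m + 1 = l + n)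
            (show (i + j + 1 - n) + m = (l - 1) + n by omega)
            (show l = (l - 1) + 1 by omega),
          cyc_eq H HC n mul π β (by omega : i + j + 1 = (i + j + 1 - n) + n)
            (show i + j = (i + j - n) + n by omega)
            (show i + j + 1 - n = (i + j - n) + 1 by omega) a b,
          map_zsmul (π (i + j + 1 - n)), hπβ, mulsl, βsmul,
          sgn_smul (i + j + 1 - n) i, sgn_smul ((i + 1) * (m + 1)) (i + j + 1 - n + i),
          Tt_eq H HC n mul B β h1t (show i + j = (i + j - n) + n by omega)
            (show i + j + 1 - n = (i + j - n) + 1 by omega)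
            (show (i + j + 1 - n) + m = (l - 1) + n by omega)
            (show l = (l - 1) + 1 by omega) (π i a) (π j b) (π m c),
          sgn_congr ((i + 1) * (m + 1) + (i + j + 1 - n + i)) (i + j + m + n + i * m)
            ⟨i + 1 - n, by ring⟩]
    have t2 : (Int.negOnePow ((m + 1) * (j + 1)) : ℤ) •
          cycBracket H HC n mul π β (by omega : (m + i + 1 - n) + j + 1 = l + n)
            (cycBracket H HC n mul π β
              (by omega : m + i + 1 = (m + i + 1 - n) + n) c a) b
        = (Int.negOnePow (i + j + m + n + j * m) : ℤ) •
            Tt H HC n mul B β h2t (π m c) (π i a) (π j b) := by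
      rw [cyc_eq H HC n mul π β (by omega : (m + i + 1 - n) + j + 1 = l + n)
            (show (m + i + 1 - n) + j = (l - 1) + n by omega)
            (show l = (l - 1) + 1 by omega),
          cyc_eq H HC n mul π β (by omega : m + i + 1 = (m + i + 1 - n) + n)
            (show m + i = (m + i - n) + n by omega)
            (show m + i + 1 - n = (m + i - n) + 1 by omega) c a,
          map_zsmul (π (m + i + 1 - n)), hπβ, mulsl, βsmul,
          sgn_smul (m + i + 1 - n) m, sgn_smul ((m + 1) * (j + 1)) (m + i + 1 - n + m),
          Tt_eq H HC n mul B β h2t (show m + i = (m + i - n) + n by omega)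
            (show m + i + 1 - n = (m + i - n) + 1 by omega)
            (show (m + i + 1 - n) + j = (l - 1) + n by omega)
            (show l = (l - 1) + 1 by omega) (π m c) (π i a) (π j b),
          sgn_congr ((m + 1) * (j + 1) + (m + i + 1 - n + m)) (i + j + m + n + j * m)
            ⟨m + 1 - n, by ring⟩]
    have t3 : (Int.negOnePow ((j + 1) * (i + 1)) : ℤ) •
          cycBracket H HC n mul π β (by omega : (j + m + 1 - n) + i + 1 = l + n)
            (cycBracket H HC n mul π β
              (by omega : j + m + 1 = (j + m + 1 - n) + n) b c) a
        = (Int.negOnePow (i + j + m + n + i * j) : ℤ) •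
            Tt H HC n mul B β h3t (π j b) (π m c) (π i a) := by
      rw [cyc_eq H HC n mul π β (by omega : (j + m + 1 - n) + i + 1 = l + n)
            (show (j + m + 1 - n) + i = (l - 1) + n by omega)
            (show l = (l - 1) + 1 by omega),
          cyc_eq H HC n mul π β (by omega : j + m + 1 = (j + m + 1 - n) + n)
            (show j + m = (j + m - n) + n by omega)
            (show j + m + 1 - n = (j + m - n) + 1 by omega) b c,
          map_zsmul (π (j + m + 1 - n)), hπβ, mulsl, βsmul,
          sgn_smul (j + m + 1 - n) j, sgn_smul ((j + 1) * (i + 1)) (j + m + 1 - n + j),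
          Tt_eq H HC n mul B β h3t (show j + m = (j + m - n) + n by omega)
            (show j + m + 1 - n = (j + m - n) + 1 by omega)
            (show (j + m + 1 - n) + i = (l - 1) + n by omega)
            (show l = (l - 1) + 1 by omega) (π j b) (π m c) (π i a),
          sgn_congr ((j + 1) * (i + 1) + (j + m + 1 - n + j)) (i + j + m + n + i * j)
            ⟨j + 1 - n, by ring⟩]
    rw [t1, t2, t3, ← sgn_smul (i + j + m + n) (i * m), ← sgn_smul (i + j + m + n) (j * m),
      ← sgn_smul (i + j + m + n) (i * j), ← smul_add, ← smul_add, main, smul_zero]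

end
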